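/- Let k be a field, let C = k[y_1, …, y_m] be a commutative polynomial ring, let L be an ideal of C, and let f ∈ C. Let k(t) be the field of rational functions in one variable t over k, let C' = k(t)[y_1, …, y_m], and let ι : C → C' be the canonical inclusion. Then the image of f in C/L is algebraic over k (i.e., there exists a nonzero polynomial q ∈ k[x] with q(f) ∈ L) if and only if 1 lies in the ideal of C' generated by ι(L) together with the element t − ι(f). -/

import Mathlib

set_option synthInstance.maxHeartbeats 1000000 in
set_option maxHeartbeats 1000000 in
/-- Subring-membership style test for algebraicity: for C = k[y_1,…,y_m], an ideal L of C and
f ∈ C, the image of f in C/L is algebraic over k (there is a nonzero q ∈ k[x] with q(f) ∈ L)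
iff 1 lies in the ideal of C' = k(t)[y_1,…,y_m] generated by the image of L together with
t − f. -/
theorem algebraic_mod_ideal_iff_one_mem_span
    (k : Type*) [Field k] (m : ℕ) (L : Ideal (MvPolynomial (Fin m) k))
    (f : MvPolynomial (Fin m) k) :
    (∃ q : Polynomial k, q ≠ 0 ∧ Polynomial.aeval f q ∈ L) ↔
      (1 : MvPolynomial (Fin m) (RatFunc k)) ∈
        Ideal.span
          ((MvPolynomial.map (algebraMap k (RatFunc k))) '' (L : Set (MvPolynomial (Fin m) k)) ∪
            {MvPolynomial.C RatFunc.X - MvPolynomial.map (algebraMap k (RatFunc k)) f}) := by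
  classical
  set ι : MvPolynomial (Fin m) k →ₐ[k] MvPolynomial (Fin m) (RatFunc k) :=
    MvPolynomial.mapAlgHom (Algebra.ofId k (RatFunc k)) with hι
  have hιmap : ∀ p : MvPolynomial (Fin m) k,
      ι p = MvPolynomial.map (algebraMap k (RatFunc k)) p := fun p => rfl
  constructor
  · rintro ⟨q, hq0, hqL⟩
    set J := Ideal.span
          ((MvPolynomial.map (algebraMap k (RatFunc k))) '' (L : Set (MvPolynomial (Fin m) k)) ∪
            {MvPolynomial.C RatFunc.X - MvPolynomial.map (algebraMap k (RatFunc k)) f}) with hJ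
    -- u = q(t) ∈ k(t) is nonzero
    set u : RatFunc k := Polynomial.aeval RatFunc.X q with hu
    have hualg : u = algebraMap (Polynomial k) (RatFunc k) q := by
      have := Polynomial.aeval_algHom_apply
        (IsScalarTower.toAlgHom k (Polynomial k) (RatFunc k)) Polynomial.X q
      simpa [RatFunc.algebraMap_X, hu] using this
    have hu0 : u ≠ 0 := by
      rw [hualg]
      exact (map_ne_zero_iff _ (IsFractionRing.injective (Polynomial k) (RatFunc k))).mpr hq0
    -- C u ∈ J
    have hCu : (MvPolynomial.C u : MvPolynomial (Fin m) (RatFunc k)) ∈ J := by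
      have h1 : (MvPolynomial.C u : MvPolynomial (Fin m) (RatFunc k))
          = Polynomial.aeval (MvPolynomial.C RatFunc.X :
              MvPolynomial (Fin m) (RatFunc k)) q := by
        have := Polynomial.aeval_algHom_apply
          (IsScalarTower.toAlgHom k (RatFunc k) (MvPolynomial (Fin m) (RatFunc k)))
          RatFunc.X q
        rw [hualg]
        simpa using this.symm
      have h2 : ι (Polynomial.aeval f q)
          = Polynomial.aeval (ι f) q :=
        (Polynomial.aeval_algHom_apply ι f q).symm
      have hdvd : (MvPolynomial.C RatFunc.X - ι f) ∣
          (Polynomial.aeval (MvPolynomial.C RatFunc.X :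
              MvPolynomial (Fin m) (RatFunc k)) q - Polynomial.aeval (ι f) q) := by
        have := Polynomial.sub_dvd_eval_sub
          (MvPolynomial.C RatFunc.X : MvPolynomial (Fin m) (RatFunc k)) (ι f)
          (q.map (algebraMap k (MvPolynomial (Fin m) (RatFunc k))))
        simpa [Polynomial.eval_map, ← Polynomial.aeval_def] using this
      have hmem1 : (MvPolynomial.C RatFunc.X - ι f) ∈ J := by
        apply Ideal.subset_span
        rw [hιmap]
        exact Set.mem_union_right _ rfl
      have hmem2 : ι (Polynomial.aeval f q) ∈ J := by
        apply Ideal.subset_span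
        exact Set.mem_union_left _ ⟨Polynomial.aeval f q, hqL, (hιmap _).symm⟩
      obtain ⟨c, hc⟩ := hdvd
      have heq : (MvPolynomial.C u : MvPolynomial (Fin m) (RatFunc k))
          = (Polynomial.aeval (MvPolynomial.C RatFunc.X :
              MvPolynomial (Fin m) (RatFunc k)) q - Polynomial.aeval (ι f) q)
            + ι (Polynomial.aeval f q) := by rw [h1, h2]; ring
      rw [heq]
      apply Ideal.add_mem _ _ hmem2
      rw [hc]
      exact Ideal.mul_mem_right _ _ hmem1
    have : (1 : MvPolynomial (Fin m) (RatFunc k))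
        = MvPolynomial.C u⁻¹ * MvPolynomial.C u := by
      rw [← map_mul, inv_mul_cancel₀ hu0, map_one]
    rw [this]
    exact Ideal.mul_mem_left _ _ hCu
  · intro h1
    -- θ : k[X] → C/L, q ↦ q(f) mod L
    set θ : Polynomial k →+* MvPolynomial (Fin m) k ⧸ L :=
      (Ideal.Quotient.mk L).comp (Polynomial.aeval f : Polynomial k →ₐ[k] _).toRingHom with hθ
    set S : Submonoid (MvPolynomial (Fin m) k ⧸ L) :=
      (nonZeroDivisors (Polynomial k)).map θ.toMonoidHom with hS
    set ρ : (MvPolynomial (Fin m) k ⧸ L) →+* Localization S := algebraMap _ _ with hρ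
    have hunits : ∀ y : (nonZeroDivisors (Polynomial k)), IsUnit ((ρ.comp θ) y) := by
      intro y
      exact IsLocalization.map_units (M := S) (Localization S)
        ⟨θ y, Submonoid.mem_map.mpr ⟨y, y.2, rfl⟩⟩
    set χ : RatFunc k →+* Localization S := IsLocalization.lift (M := nonZeroDivisors (Polynomial k)) (S := RatFunc k)
      (P := Localization S) (g := ρ.comp θ) hunits with hχ
    set Φ : MvPolynomial (Fin m) (RatFunc k) →+* Localization S :=
      MvPolynomial.eval₂Hom χ (fun j => ρ (Ideal.Quotient.mk L (MvPolynomial.X j))) with hΦ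
    have hΦC : ∀ x : RatFunc k, Φ (MvPolynomial.C x) = χ x := fun x =>
      MvPolynomial.eval₂Hom_C _ _ _
    have hχalg : ∀ p : Polynomial k,
        χ (algebraMap (Polynomial k) (RatFunc k) p) = ρ (Ideal.Quotient.mk L
          (Polynomial.aeval f p)) := by
      intro p
      rw [hχ, IsLocalization.lift_eq hunits]
      rfl
    -- Φ ∘ ι = ρ ∘ mk L
    have hcomp : Φ.comp (ι : MvPolynomial (Fin m) k →+* _)
        = ρ.comp (Ideal.Quotient.mk L) := by
      apply MvPolynomial.ringHom_ext
      · intro a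
        have h2 : (ι : MvPolynomial (Fin m) k →+* MvPolynomial (Fin m) (RatFunc k))
            (MvPolynomial.C a) = MvPolynomial.C (algebraMap k (RatFunc k) a) := by
          show ι (MvPolynomial.C a) = _
          simp [hιmap, MvPolynomial.map_C]
        have h3 : algebraMap k (RatFunc k) a
            = algebraMap (Polynomial k) (RatFunc k) (Polynomial.C a) := by
          rw [IsScalarTower.algebraMap_apply k (Polynomial k) (RatFunc k),
            Polynomial.algebraMap_eq]
        rw [RingHom.comp_apply, RingHom.comp_apply, h2, hΦC, h3, hχalg]
        congr 1
        rw [Polynomial.aeval_C, MvPolynomial.algebraMap_eq]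
      · intro j
        have h2 : (ι : MvPolynomial (Fin m) k →+* MvPolynomial (Fin m) (RatFunc k))
            (MvPolynomial.X j) = MvPolynomial.X j := by
          show ι (MvPolynomial.X j) = _
          simp [hιmap]
        simp [RingHom.comp_apply, h2, hΦ]
    have hcompap : ∀ p, Φ (ι p) = ρ (Ideal.Quotient.mk L p) := fun p =>
      RingHom.congr_fun hcomp p
    -- Φ kills the generators
    have hgen : ∀ x ∈ ((MvPolynomial.map (algebraMap k (RatFunc k))) ''
          (L : Set (MvPolynomial (Fin m) k)) ∪
          {MvPolynomial.C RatFunc.X - MvPolynomial.map (algebraMap k (RatFunc k)) f}),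
        Φ x = 0 := by
      rintro x (⟨l, hl, rfl⟩ | hx)
      · rw [← hιmap, hcompap]
        simp [Ideal.Quotient.eq_zero_iff_mem.mpr hl]
      · rcases hx with rfl
        rw [map_sub, ← hιmap, hcompap, hΦC, ← RatFunc.algebraMap_X, hχalg]
        rw [Polynomial.aeval_X, sub_self]
    -- hence Φ 1 = 0, so 1 = 0 in the localization
    have hker : Φ 1 = 0 := by
      have hle : Ideal.span ((MvPolynomial.map (algebraMap k (RatFunc k))) ''
          (L : Set (MvPolynomial (Fin m) k)) ∪
          {MvPolynomial.C RatFunc.X - MvPolynomial.map (algebraMap k (RatFunc k)) f})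
          ≤ RingHom.ker Φ := Ideal.span_le.mpr (fun x hx => hgen x hx)
      exact (RingHom.mem_ker).mp (hle h1)
    have h10 : (1 : Localization S) = 0 := by simpa using hker
    have hz : algebraMap (MvPolynomial (Fin m) k ⧸ L) (Localization S) 1 = 0 := by
      simp [h10]
    obtain ⟨s, hs⟩ := (IsLocalization.map_eq_zero_iff S (Localization S) 1).mp hz
    obtain ⟨q, hqnz, hqθ⟩ := s.2
    refine ⟨q, mem_nonZeroDivisors_iff_ne_zero.mp hqnz, ?_⟩
    have hθq : θ q = 0 := by
      rw [mul_one] at hs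
      rw [show (s : MvPolynomial (Fin m) k ⧸ L) = θ q from hqθ.symm] at hs
      exact hs
    rw [hθ] at hθq
    exact Ideal.Quotient.eq_zero_iff_mem.mp hθq
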